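/- Let k be a positive integer with 3 ∤ k and let l_k denote the odd part of k. Let M be an abelian group, and suppose there are group homomorphisms α : D → M and g : M → ℤ/3ℤ such that the sequence D → D → M → ℤ/3ℤ → ℤ/3ℤ (with first and last maps multiplication by k) is exact at the second D, at M, and at the first ℤ/3ℤ, where D is the group of dyadic rationals. Then M is isomorphic to ℤ/l_kℤ. -/

import Mathlib

/-- The additive group of dyadic rationals `ℤ[1/2] = {a / 2^n : a ∈ ℤ, n ∈ ℕ}`,
as an additive subgroup of `ℚ`. -/
def dyadic : AddSubgroup ℚ where
  carrier := {x : ℚ | ∃ (a : ℤ) (n : ℕ), x = (a : ℚ) / 2 ^ n}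
  zero_mem' := ⟨0, 0, by norm_num⟩
  add_mem' := by
    rintro x y ⟨a, n, rfl⟩ ⟨b, m, rfl⟩
    refine ⟨a * 2 ^ m + b * 2 ^ n, n + m, ?_⟩
    push_cast
    rw [pow_add]
    field_simp
  neg_mem' := by
    rintro x ⟨a, n, rfl⟩
    exact ⟨-a, n, by push_cast; ring⟩

/-- The odd part (largest odd divisor) of a natural number. -/
noncomputable def oddPart (k : ℕ) : ℕ := k / 2 ^ (k.factorization 2)

/-- Computation of `K₀(A;ℤ_k) ≅ ℤ/l_kℤ` for `3 ∤ k` from the coefficient exact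
sequence `D → D → M → ℤ/3 → ℤ/3` (outer maps multiplication by `k`), where `D`
is the group of dyadic rationals and `l_k` is the odd part of `k`. -/
theorem mod_k_K_theory_of_A (k : ℕ) (hk : 0 < k) (h3 : ¬ (3 ∣ k))
    {M : Type*} [AddCommGroup M]
    (α : ↥dyadic →+ M) (g : M →+ ZMod 3)
    (hex1 : (k • AddMonoidHom.id ↥dyadic).range = α.ker)
    (hex2 : α.range = g.ker)
    (hex3 : g.range = (k • AddMonoidHom.id (ZMod 3)).ker) :
    Nonempty (M ≃+ ZMod (oddPart k)) := by
  classical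
  set l : ℕ := oddPart k with hldef
  set v : ℕ := k.factorization 2 with hvdef
  have hvl : 2 ^ v * l = k := Nat.ordProj_mul_ordCompl_eq_self k 2
  have hl2 : ¬ (2 ∣ l) := Nat.not_dvd_ordCompl Nat.prime_two hk.ne'
  have hlpos : 0 < l := Nat.ordCompl_pos 2 hk.ne'
  -- g = 0, so α is surjective
  have hg0 : ∀ x, g x = 0 := by
    intro x
    have hx : g x ∈ (k • AddMonoidHom.id (ZMod 3)).ker := hex3 ▸ ⟨x, rfl⟩
    have hx' : (k : ZMod 3) * g x = 0 := by
      simpa [AddMonoidHom.mem_ker, nsmul_eq_mul] using hx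
    have hk3 : (k : ZMod 3) ≠ 0 := by
      rw [Ne, ZMod.natCast_eq_zero_iff]; exact h3
    exact (mul_eq_zero.mp hx').resolve_left hk3
  have hαsurj : Function.Surjective α := fun m => by
    have : m ∈ g.ker := hg0 m
    rw [← hex2] at this
    exact this
  -- inclusion ℤ → dyadic
  have jmem : ∀ a : ℤ, ((a : ℚ)) ∈ dyadic := fun a => ⟨a, 0, by norm_num⟩
  let j : ℤ →+ ↥dyadic :=
    { toFun := fun a => ⟨(a : ℚ), jmem a⟩
      map_zero' := Subtype.ext (by push_cast; ring)
      map_add' := fun a b => Subtype.ext (by push_cast; ring) }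
  -- membership in ker α
  have hker : ∀ x : ↥dyadic, x ∈ α.ker ↔ ∃ d : ↥dyadic, k • d = x := by
    intro x
    rw [← hex1]
    constructor
    · rintro ⟨d, rfl⟩; exact ⟨d, rfl⟩
    · rintro ⟨d, rfl⟩; exact ⟨d, rfl⟩
  let ψ : ℤ →+ ↥dyadic ⧸ α.ker := (QuotientAddGroup.mk' α.ker).comp j
  -- kernel of ψ
  have hψker : ψ.ker = AddSubgroup.zmultiples (l : ℤ) := by
    ext a
    show (QuotientAddGroup.mk' α.ker) (j a) = 0 ↔ _
    rw [QuotientAddGroup.mk'_apply, QuotientAddGroup.eq_zero_iff, hker,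
      AddSubgroup.mem_zmultiples_iff]
    constructor
    · rintro ⟨⟨q, b, n, rfl⟩, hd⟩
      have hq : (k : ℚ) * ((b : ℚ) / 2 ^ n) = (a : ℚ) := by
        have := congrArg Subtype.val hd
        simpa [nsmul_eq_mul, j] using this
      have hint : (k : ℤ) * b = a * 2 ^ n := by
        have h2 : (2 : ℚ) ^ n ≠ 0 := by positivity
        have : ((k : ℤ) * b : ℚ) = ((a * 2 ^ n : ℤ) : ℚ) := by
          push_cast
          field_simp at hq ⊢
          linarith [hq]
        exact_mod_cast this
      have hdvd : (l : ℤ) ∣ a * 2 ^ n := by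
        refine ⟨(2 ^ v) * b, ?_⟩
        rw [← hint, ← hvl]; push_cast; ring
      have hcop : IsCoprime (l : ℤ) ((2 : ℤ) ^ n) := by
        apply IsCoprime.pow_right
        rw [Int.isCoprime_iff_gcd_eq_one]
        have : Nat.Coprime l 2 := ((Nat.prime_two.coprime_iff_not_dvd).mpr hl2).symm
        simpa [Int.gcd] using this
      obtain ⟨c, hc⟩ := hcop.dvd_of_dvd_mul_right hdvd
      exact ⟨c, by rw [smul_eq_mul]; linarith [hc]⟩
    · rintro ⟨c, rfl⟩
      refine ⟨⟨(c : ℚ) / 2 ^ v, c, v, rfl⟩, ?_⟩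
      apply Subtype.ext
      rw [AddSubmonoidClass.coe_nsmul]
      show (k : ℕ) • ((c : ℚ) / 2 ^ v) = ((c • (l : ℤ) : ℤ) : ℚ)
      have h2 : (2 : ℚ) ^ v ≠ 0 := by positivity
      rw [nsmul_eq_mul, smul_eq_mul, ← hvl]
      push_cast
      field_simp
  -- surjectivity of ψ
  have hψsurj : Function.Surjective ψ := by
    have hcop : IsCoprime (2 : ℤ) (l : ℤ) := by
      rw [Int.isCoprime_iff_gcd_eq_one]
      have : Nat.Coprime 2 l := (Nat.prime_two.coprime_iff_not_dvd).mpr hl2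
      simpa [Int.gcd] using this
    obtain ⟨m, w, hmw⟩ := hcop
    intro q
    obtain ⟨x, rfl⟩ := QuotientAddGroup.mk'_surjective α.ker q
    obtain ⟨xq, a, n, hx⟩ := x
    refine ⟨a * m ^ n, ?_⟩
    show (QuotientAddGroup.mk' α.ker) (j (a * m ^ n)) = (QuotientAddGroup.mk' α.ker) ⟨xq, _⟩
    rw [QuotientAddGroup.mk'_eq_mk']
    have hdvd : (l : ℤ) ∣ (2 * m) ^ n - 1 := by
      have h1 : (l : ℤ) ∣ 2 * m - 1 := ⟨-w, by linarith [hmw]⟩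
      calc (l : ℤ) ∣ (2*m) - 1 := h1
        _ ∣ (2*m) ^ n - 1 ^ n := sub_dvd_pow_sub_pow _ _ n
        _ = (2*m) ^ n - 1 := by ring
    obtain ⟨c, hc⟩ := hdvd
    have h2n : (2 : ℚ) ^ n ≠ 0 := by positivity
    have h2nv : (2 : ℚ) ^ (n + v) ≠ 0 := by positivity
    refine ⟨⟨((-(a * c * l) : ℤ) : ℚ) / 2 ^ n, -(a * c * l), n, rfl⟩, ?_, ?_⟩
    · rw [hker]
      refine ⟨⟨((-(a * c) : ℤ) : ℚ) / 2 ^ (n + v), -(a * c), n + v, rfl⟩, ?_⟩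
      apply Subtype.ext
      rw [AddSubmonoidClass.coe_nsmul]
      show (k : ℕ) • (((-(a * c) : ℤ) : ℚ) / 2 ^ (n + v)) = ((-(a * c * l) : ℤ) : ℚ) / 2 ^ n
      rw [nsmul_eq_mul, ← hvl]
      push_cast
      rw [pow_add]
      field_simp
    · apply Subtype.ext
      show ((a * m ^ n : ℤ) : ℚ) + ((-(a * c * l) : ℤ) : ℚ) / 2 ^ n = xq
      rw [hx]
      have hcq : ((2 : ℚ) * m) ^ n - 1 = (l : ℚ) * c := by exact_mod_cast hc
      field_simp
      push_cast
      rw [mul_pow] at hcq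
      linear_combination (a : ℚ) * hcq
  -- assemble
  have e1 : (↥dyadic ⧸ α.ker) ≃+ M := QuotientAddGroup.quotientKerEquivOfSurjective α hαsurj
  have e2 : (ℤ ⧸ ψ.ker) ≃+ (↥dyadic ⧸ α.ker) := QuotientAddGroup.quotientKerEquivOfSurjective ψ hψsurj
  have e3 : (ℤ ⧸ ψ.ker) ≃+ (ℤ ⧸ AddSubgroup.zmultiples (l:ℤ)) := QuotientAddGroup.quotientAddEquivOfEq hψker
  exact ⟨(e1.symm.trans e2.symm).trans (e3.trans (Int.quotientZMultiplesNatEquivZMod l))⟩
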